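/- If G is a caterpillar, then ρ_T(G) ≤ 2; consequently, for every n > 3, the path P_n on n vertices satisfies ρ_T(P_n) = 2. -/

import Mathlib

/-- A min-plus `k`-tropical dot product representation of `G` with threshold `t`:
distinct vertices `x, y` are adjacent iff `min_{1 ≤ i ≤ k} (f(x)_i + f(y)_i) ≥ t`
(equivalently, every coordinate sum is at least `t`). -/
def MinPlusRep {V : Type*} (G : SimpleGraph V) (k : ℕ) (f : V → Fin k → ℝ) (t : ℝ) : Prop :=
  0 < t ∧ ∀ x y : V, x ≠ y → (G.Adj x y ↔ ∀ i : Fin k, t ≤ f x i + f y i)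

/-- The min-plus tropical dot product dimension `ρ_T(G)`. -/
noncomputable def rhoT {V : Type*} (G : SimpleGraph V) : ℕ :=
  sInf {k : ℕ | 0 < k ∧ ∃ (f : V → Fin k → ℝ) (t : ℝ), MinPlusRep G k f t}

/-- A caterpillar is a tree (connected acyclic graph) containing a path that includes at
least one endpoint of every edge. -/
def IsCaterpillar {V : Type*} (G : SimpleGraph V) : Prop :=
  G.Connected ∧ G.IsAcyclic ∧
    ∃ (u v : V) (p : G.Walk u v), p.IsPath ∧ ∀ e ∈ G.edgeSet, ∃ w ∈ p.support, w ∈ e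

open Classical in
lemma rep2 {V : Type} (G : SimpleGraph V) (sp : V → Prop) (σ : V → ℕ)
    (h : ∀ x y : V, x ≠ y → (G.Adj x y ↔
      ((sp x ∧ sp y ∧ (σ x = σ y + 1 ∨ σ y = σ x + 1)) ∨
       (¬(sp x ∧ sp y) ∧ (sp x ∨ sp y) ∧ σ x = σ y)))) :
    ∃ (f : V → Fin 2 → ℝ) (t : ℝ), MinPlusRep G 2 f t := by
  classical
  set e1 : V → ℤ := fun v =>
    if sp v then (if σ v % 2 = 0 then (σ v : ℤ) + 2 else -((σ v : ℤ) + 1))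
    else (if σ v % 2 = 0 then -((σ v : ℤ) + 2) else (σ v : ℤ) + 1) with he1
  set e2 : V → ℤ := fun v =>
    if sp v then (if σ v % 2 = 0 then -((σ v : ℤ) + 1) else (σ v : ℤ) + 2)
    else (if σ v % 2 = 0 then (σ v : ℤ) + 1 else -((σ v : ℤ) + 2)) with he2
  have helper : ∀ a b : ℤ, ((2:ℝ) ≤ (((a + 1 : ℤ)):ℝ) + (((b + 1 : ℤ)):ℝ)) ↔ 0 ≤ a + b := by
    intro a b
    rw [show (((a+1:ℤ)):ℝ) + (((b+1:ℤ)):ℝ) = (((a+b+2 : ℤ)):ℝ) by push_cast; ring]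
    rw [show (2:ℝ) = ((2:ℤ):ℝ) by norm_num, Int.cast_le]
    omega
  refine ⟨fun v i => (((if i = 0 then e1 v else e2 v) + 1 : ℤ) : ℝ), 2, two_pos, ?_⟩
  intro x y hxy
  rw [h x y hxy, Fin.forall_fin_two]
  simp only [if_pos, if_neg, Fin.one_eq_zero_iff, reduceIte, show (1 : Fin 2) ≠ 0 by decide,
    if_true, if_false]
  rw [helper, helper]
  by_cases hx : sp x <;> by_cases hy : sp y <;>
    by_cases px : σ x % 2 = 0 <;> by_cases py : σ y % 2 = 0 <;>
      simp only [he1, he2, hx, hy, px, py, if_true, if_false, eq_self_iff_true, not_true,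
        not_false_iff, true_and, false_and, and_true, and_false, true_or, or_true,
        false_or, or_false, false_iff, iff_false, if_pos, if_neg, not_true_eq_false, not_false_eq_true] <;>
      omega

open SimpleGraph List


-- L1: path within support
lemma subpath_support {V : Type} {G : SimpleGraph V} {u v : V} {p : G.Walk u v}
    (hp : p.IsPath) {x y : V} (hx : x ∈ p.support) (hy : y ∈ p.support) :
    ∃ q : G.Walk x y, q.IsPath ∧ (∀ z ∈ q.support, z ∈ p.support) ∧
      ∀ e ∈ q.edges, e ∈ p.edges := by
  classical
  by_cases hxy : x ∈ (p.takeUntil y hy).support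
  · refine ⟨(p.takeUntil y hy).dropUntil x hxy, (hp.takeUntil hy).dropUntil hxy, ?_, ?_⟩
    · exact fun z hz => p.support_takeUntil_subset hy
        ((p.takeUntil y hy).support_dropUntil_subset hxy hz)
    · exact fun e he => p.edges_takeUntil_subset hy
        ((p.takeUntil y hy).edges_dropUntil_subset hxy he)
  · have hxapp : x ∈ ((p.takeUntil y hy).append (p.dropUntil y hy)).support := by
      rw [SimpleGraph.Walk.take_spec p hy]; exact hx
    have hx' : x ∈ (p.dropUntil y hy).support := by
      rcases (SimpleGraph.Walk.mem_support_append_iff _ _).mp hxapp with h | h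
      · exact absurd h hxy
      · exact h
    refine ⟨((p.dropUntil y hy).takeUntil x hx').reverse,
      ((hp.dropUntil hy).takeUntil hx').reverse, ?_, ?_⟩
    · intro z hz
      rw [SimpleGraph.Walk.support_reverse, List.mem_reverse] at hz
      exact p.support_dropUntil_subset hy ((p.dropUntil y hy).support_takeUntil_subset hx' hz)
    · intro e he
      rw [SimpleGraph.Walk.edges_reverse, List.mem_reverse] at he
      exact p.edges_dropUntil_subset hy ((p.dropUntil y hy).edges_takeUntil_subset hx' he)

-- L5: edge of a path gives consecutive indexOf
lemma edge_indexOf {V : Type} [DecidableEq V] {G : SimpleGraph V} {u v : V}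
    (p : G.Walk u v) (hnd : p.support.Nodup) {x y : V} (he : s(x, y) ∈ p.edges) :
    p.support.idxOf y = p.support.idxOf x + 1 ∨
      p.support.idxOf x = p.support.idxOf y + 1 := by
  induction p with
  | nil => simp at he
  | @cons a b c ha q ih =>
    rw [SimpleGraph.Walk.support_cons] at hnd ⊢
    have hanotin : a ∉ q.support := (List.nodup_cons.mp hnd).1
    have hnd' : q.support.Nodup := (List.nodup_cons.mp hnd).2
    rw [SimpleGraph.Walk.edges_cons, List.mem_cons] at he
    have hb : b ∈ q.support := q.start_mem_support
    have hba : b ≠ a := fun h => hanotin (h ▸ hb)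
    have hidxb : q.support.idxOf b = 0 := by
      rw [q.support_eq_cons]; exact List.idxOf_cons_self
    have hidxa : (a :: q.support).idxOf a = 0 := List.idxOf_cons_self
    have hidxb' : (a :: q.support).idxOf b = 1 := by
      rw [List.idxOf_cons_ne _ hba.symm, hidxb]
    rcases he with heq | hm
    · rcases Sym2.eq_iff.mp heq with ⟨rfl, rfl⟩ | ⟨rfl, rfl⟩
      · omega
      · omega
    · have hxq : x ∈ q.support := SimpleGraph.Walk.fst_mem_support_of_mem_edges q hm
      have hyq : y ∈ q.support := SimpleGraph.Walk.snd_mem_support_of_mem_edges q hm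
      have hxa : x ≠ a := fun h => hanotin (h ▸ hxq)
      have hya : y ≠ a := fun h => hanotin (h ▸ hyq)
      have h1 : (a :: q.support).idxOf x = q.support.idxOf x + 1 :=
        List.idxOf_cons_ne _ hxa.symm
      have h2 : (a :: q.support).idxOf y = q.support.idxOf y + 1 :=
        List.idxOf_cons_ne _ hya.symm
      rcases ih hnd' hm with h | h <;> omega

-- L6: consecutive indexOf gives adjacency
lemma adj_of_indexOf {V : Type} [DecidableEq V] {G : SimpleGraph V} {u v : V}
    (p : G.Walk u v) {x y : V} (hx : x ∈ p.support) (hy : y ∈ p.support)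
    (h : p.support.idxOf y = p.support.idxOf x + 1) : G.Adj x y := by
  have hchain := p.isChain_adj_support
  rw [List.isChain_iff_getElem] at hchain
  have hix : p.support.idxOf x < p.support.length := List.idxOf_lt_length_iff.mpr hx
  have hiy : p.support.idxOf y < p.support.length := List.idxOf_lt_length_iff.mpr hy
  have hadj := hchain (p.support.idxOf x) (by omega)
  simp only [List.getElem_idxOf hix] at hadj
  have h2 : p.support[p.support.idxOf x + 1] = y := by
    simp_rw [← h]
    exact List.getElem_idxOf hiy
  rwa [h2] at hadj

lemma caterpillar_labeling {V : Type} (G : SimpleGraph V) (hG : IsCaterpillar G) :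
    ∃ (sp : V → Prop) (σ : V → ℕ),
      ∀ x y : V, x ≠ y → (G.Adj x y ↔
        ((sp x ∧ sp y ∧ (σ x = σ y + 1 ∨ σ y = σ x + 1)) ∨
         (¬(sp x ∧ sp y) ∧ (sp x ∨ sp y) ∧ σ x = σ y))) := by
  classical
  obtain ⟨hconn, hacyc, u, v, p, hp, hcov⟩ := hG
  have hnd : p.support.Nodup := hp.support_nodup
  -- neighbor-in-support lemma
  have L2a : ∀ {l s : V}, l ∉ p.support → G.Adj l s → s ∈ p.support := by
    intro l s hl ha
    obtain ⟨w, hw, hwe⟩ := hcov s(l, s) (G.mem_edgeSet.mpr ha)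
    rcases Sym2.mem_iff.mp hwe with rfl | rfl
    · exact absurd hw hl
    · exact hw
  -- uniqueness of neighbor
  have L2b : ∀ {l s s' : V}, l ∉ p.support → G.Adj l s → G.Adj l s' → s = s' := by
    intro l s s' hl h1 h2
    by_contra hss
    obtain ⟨q, hq, hsub, -⟩ := subpath_support hp (L2a hl h1) (L2a hl h2)
    have hq2 : (SimpleGraph.Walk.cons h1.symm (SimpleGraph.Walk.cons h2 SimpleGraph.Walk.nil) :
        G.Walk s s').IsPath := by
      simp only [SimpleGraph.Walk.isPath_def, SimpleGraph.Walk.support_cons,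
        SimpleGraph.Walk.support_nil, List.nodup_cons, List.mem_cons, List.mem_singleton,
        List.not_mem_nil, or_false, List.nodup_nil, and_true, List.mem_singleton]
      refine ⟨?_, ?_⟩
      · rintro (rfl | rfl)
        · exact h1.ne' rfl
        · exact hss rfl
      · exact ⟨fun h => h2.ne h, not_false⟩
    have hequ := hacyc.path_unique ⟨q, hq⟩ ⟨_, hq2⟩
    have : l ∈ q.support := by
      have := congrArg (fun r : G.Path s s' => l ∈ r.1.support) hequ
      simp only [SimpleGraph.Walk.support_cons, SimpleGraph.Walk.support_nil] at this
      rw [this]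
      simp
    exact hl (hsub l this)
  -- existence of a neighbor
  have L3 : ∀ {l : V}, l ∉ p.support → ∃ s, G.Adj l s := by
    intro l hl
    have hne : l ≠ u := fun h => hl (h ▸ p.start_mem_support)
    obtain ⟨w⟩ := hconn.preconnected l u
    cases w with
    | nil => exact absurd rfl hne
    | cons ha _ => exact ⟨_, ha⟩
  -- adjacency inside the spine is an edge of p
  have L4 : ∀ {x y : V}, x ∈ p.support → y ∈ p.support → G.Adj x y → s(x, y) ∈ p.edges := by
    intro x y hx hy ha
    obtain ⟨q, hq, -, hqe⟩ := subpath_support hp hx hy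
    have h2 : (SimpleGraph.Walk.cons ha SimpleGraph.Walk.nil : G.Walk x y).IsPath := by
      simp [SimpleGraph.Walk.isPath_def, ha.ne]
    have hequ := hacyc.path_unique ⟨q, hq⟩ ⟨_, h2⟩
    have hqq : q = SimpleGraph.Walk.cons ha SimpleGraph.Walk.nil :=
      congrArg Subtype.val hequ
    apply hqe
    rw [hqq]
    simp
  -- the chosen neighbor
  set N : V → V := fun w => if hw : ∃ s, G.Adj w s then hw.choose else u with hN
  have hNadj : ∀ {l : V}, l ∉ p.support → G.Adj l (N l) := by
    intro l hl
    have hex := L3 hl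
    simp only [hN, dif_pos hex]
    exact hex.choose_spec
  have hNmem : ∀ {l : V}, l ∉ p.support → N l ∈ p.support := fun hl => L2a hl (hNadj hl)
  set σ : V → ℕ := fun w =>
    if _ : w ∈ p.support then p.support.idxOf w else p.support.idxOf (N w) with hσ
  have hσs : ∀ {w : V}, w ∈ p.support → σ w = p.support.idxOf w := by
    intro w h; simp only [hσ, dif_pos h]
  have hσl : ∀ {w : V}, w ∉ p.support → σ w = p.support.idxOf (N w) := by
    intro w h; simp only [hσ, dif_neg h]
  refine ⟨fun w => w ∈ p.support, σ, ?_⟩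
  intro x y hxy
  by_cases hx : x ∈ p.support <;> by_cases hy : y ∈ p.support
  · -- both spine
    constructor
    · intro ha
      refine Or.inl ⟨hx, hy, ?_⟩
      rw [hσs hx, hσs hy]
      rcases edge_indexOf p hnd (L4 hx hy ha) with h | h
      · exact Or.inr h
      · exact Or.inl h
    · rintro (⟨-, -, hd⟩ | ⟨hns, -, -⟩)
      · rw [hσs hx, hσs hy] at hd
        rcases hd with h | h
        · exact (adj_of_indexOf p hy hx h).symm
        · exact adj_of_indexOf p hx hy h
      · exact absurd ⟨hx, hy⟩ hns
  · -- x spine, y leaf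
    constructor
    · intro ha
      refine Or.inr ⟨fun h => hy h.2, Or.inl hx, ?_⟩
      rw [hσs hx, hσl hy]
      have hxN : x = N y := L2b hy ha.symm (hNadj hy)
      rw [hxN]
    · rintro (⟨-, hsy, -⟩ | ⟨-, -, heq⟩)
      · exact absurd hsy hy
      · rw [hσs hx, hσl hy] at heq
        have : x = N y := (List.idxOf_inj hx).mp heq
        rw [this]
        exact (hNadj hy).symm
  · -- x leaf, y spine
    constructor
    · intro ha
      refine Or.inr ⟨fun h => hx h.1, Or.inr hy, ?_⟩
      rw [hσs hy, hσl hx]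
      have hyN : y = N x := L2b hx ha (hNadj hx)
      rw [hyN]
    · rintro (⟨hsx, -, -⟩ | ⟨-, -, heq⟩)
      · exact absurd hsx hx
      · rw [hσs hy, hσl hx] at heq
        have : y = N x := (List.idxOf_inj hy).mp heq.symm
        rw [this]
        exact hNadj hx
  · -- neither
    constructor
    · intro ha
      obtain ⟨w, hw, hwe⟩ := hcov s(x, y) (G.mem_edgeSet.mpr ha)
      rcases Sym2.mem_iff.mp hwe with rfl | rfl
      · exact absurd hw hx
      · exact absurd hw hy
    · rintro (⟨hsx, -, -⟩ | ⟨-, (hsx | hsy), -⟩)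
      · exact absurd hsx hx
      · exact absurd hsx hx
      · exact absurd hsy hy


lemma caterpillar_rep {V : Type} (G : SimpleGraph V) (hG : IsCaterpillar G) :
    ∃ (f : V → Fin 2 → ℝ) (t : ℝ), MinPlusRep G 2 f t := by
  obtain ⟨sp, σ, h⟩ := caterpillar_labeling G hG
  exact rep2 G sp σ h

lemma two_mem {V : Type} (G : SimpleGraph V)
    (h : ∃ (f : V → Fin 2 → ℝ) (t : ℝ), MinPlusRep G 2 f t) :
    2 ∈ {k : ℕ | 0 < k ∧ ∃ (f : V → Fin k → ℝ) (t : ℝ), MinPlusRep G k f t} :=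
  ⟨two_pos, h⟩

lemma path_no_one {n : ℕ} (hn : 3 < n) :
    1 ∉ {k : ℕ | 0 < k ∧ ∃ (f : Fin n → Fin k → ℝ) (t : ℝ),
      MinPlusRep (SimpleGraph.pathGraph n) k f t} := by
  rintro ⟨-, f, t, ht, hrep⟩
  set v0 : Fin n := ⟨0, by omega⟩
  set v1 : Fin n := ⟨1, by omega⟩
  set v2 : Fin n := ⟨2, by omega⟩
  set v3 : Fin n := ⟨3, by omega⟩
  have hadj : ∀ i j : Fin n, (i : ℕ) + 1 = j → (SimpleGraph.pathGraph n).Adj i j :=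
    fun i j h => SimpleGraph.pathGraph_adj.mpr (Or.inl h)
  have h01 := (hrep v0 v1 (by simp [v0, v1, Fin.ext_iff])).mp (hadj v0 v1 rfl) 0
  have h12 := (hrep v1 v2 (by simp [v1, v2, Fin.ext_iff])).mp (hadj v1 v2 rfl) 0
  have h23 := (hrep v2 v3 (by simp [v2, v3, Fin.ext_iff])).mp (hadj v2 v3 rfl) 0
  have hno02 : ¬ (SimpleGraph.pathGraph n).Adj v0 v2 := by
    rw [SimpleGraph.pathGraph_adj]
    simp [v0, v2]
  have hno13 : ¬ (SimpleGraph.pathGraph n).Adj v1 v3 := by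
    rw [SimpleGraph.pathGraph_adj]
    simp [v1, v3]
  have h02 : ¬ (t ≤ f v0 0 + f v2 0) := by
    intro hh
    exact hno02 ((hrep v0 v2 (by simp [v0, v2, Fin.ext_iff])).mpr
      (fun i => by rw [Fin.fin_one_eq_zero i]; exact hh))
  have h13 : ¬ (t ≤ f v1 0 + f v3 0) := by
    intro hh
    exact hno13 ((hrep v1 v3 (by simp [v1, v3, Fin.ext_iff])).mpr
      (fun i => by rw [Fin.fin_one_eq_zero i]; exact hh))
  push_neg at h02 h13
  linarith

lemma path_rep {n : ℕ} :
    ∃ (f : Fin n → Fin 2 → ℝ) (t : ℝ), MinPlusRep (SimpleGraph.pathGraph n) 2 f t := by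
  apply rep2 (SimpleGraph.pathGraph n) (fun _ => True) (fun w => (w : ℕ))
  intro x y hxy
  rw [SimpleGraph.pathGraph_adj]
  have : (x : ℕ) ≠ (y : ℕ) := fun h => hxy (Fin.ext h)
  simp only [true_and, not_true_eq_false, false_and, and_false, or_false, and_true,
    true_or, not_and, not_true, false_or]
  omega

/-- Every caterpillar satisfies `ρ_T(G) ≤ 2`; consequently `ρ_T(P_n) = 2` for all `n > 3`. -/
theorem stmt_18 :
    (∀ (V : Type) [Fintype V] (G : SimpleGraph V), IsCaterpillar G → rhoT G ≤ 2) ∧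
      (∀ n : ℕ, 3 < n → rhoT (SimpleGraph.pathGraph n) = 2) := by
  constructor
  · intro V _ G hG
    exact Nat.sInf_le (two_mem G (caterpillar_rep G hG))
  · intro n hn
    have h2 := two_mem (SimpleGraph.pathGraph n) path_rep
    have h1 := path_no_one hn
    have hmem := Nat.sInf_mem ⟨2, h2⟩
    have hle : rhoT (SimpleGraph.pathGraph n) ≤ 2 := Nat.sInf_le h2
    rw [rhoT] at *
    set k := sInf {k : ℕ | 0 < k ∧ ∃ (f : Fin n → Fin k → ℝ) (t : ℝ),
      MinPlusRep (SimpleGraph.pathGraph n) k f t} with hk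
    have hpos : 0 < k := hmem.1
    have hne1 : k ≠ 1 := fun h => h1 (h ▸ hmem)
    omega
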